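/- Let C₀ ↔ f₀ : [a,b] → ℝ^M be a continuous rectifiable curve and let C_k ↔ f_k : [a,b] → ℝ^M (k = 1, 2, …) be continuous rectifiable curves such that f_k converges uniformly to f₀ on [a,b] and ℓ(C_k) → ℓ(C₀). Then the inscribed sums converge to the lengths uniformly in k: for every ε > 0 there exists δ > 0 such that for every k ≥ 1 and every partition Q of [a,b] with mesh ‖Q‖ < δ, one has ℓ(C_k) − V(f_k;Q) < ε. -/

import Mathlib

open scoped BigOperators ENNReal
open MeasureTheory Filter

noncomputable section

/-- A partition `a = x 0 < x 1 < ⋯ < x n = b` of the interval `[a,b]`. -/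
structure IntervalPartition (a b : ℝ) where
  n : ℕ
  x : Fin (n + 1) → ℝ
  mono : StrictMono x
  first : x 0 = a
  last : x (Fin.last n) = b

/-- The mesh `‖P‖ = maxᵢ (xᵢ − xᵢ₋₁)` of a partition. -/
def IntervalPartition.mesh {a b : ℝ} (P : IntervalPartition a b) : ℝ :=
  ⨆ i : Fin P.n, (P.x i.succ - P.x i.castSucc)

/-- The inscribed sum `V(f;P) = Σᵢ ‖f(xᵢ) − f(xᵢ₋₁)‖`. -/
def inscribedSum {M : ℕ} (f : ℝ → EuclideanSpace ℝ (Fin M)) {a b : ℝ}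
    (P : IntervalPartition a b) : ℝ :=
  ∑ i : Fin P.n, ‖f (P.x i.succ) - f (P.x i.castSucc)‖

/-- The length `ℓ(C)` of the curve `C ↔ f : [a,b] → ℝ^M`: the supremum of the inscribed sums
over all partitions of `[a,b]`, a value in `[0,+∞]`. -/
def curveLength {M : ℕ} (f : ℝ → EuclideanSpace ℝ (Fin M)) (a b : ℝ) : ℝ≥0∞ :=
  ⨆ P : IntervalPartition a b, ENNReal.ofReal (inscribedSum f P)

/-- The total variation `T_h[a,b]` of a real function `h` on `[a,b]`. -/
def totalVariation (h : ℝ → ℝ) (a b : ℝ) : ℝ≥0∞ :=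
  ⨆ P : IntervalPartition a b, ENNReal.ofReal (∑ i : Fin P.n, |h (P.x i.succ) - h (P.x i.castSucc)|)

/-- The positive variation `T_h⁺[a,b]` of a real function `h` on `[a,b]`. -/
def posVariation (h : ℝ → ℝ) (a b : ℝ) : ℝ≥0∞ :=
  ⨆ P : IntervalPartition a b,
    ENNReal.ofReal (∑ i : Fin P.n, max (h (P.x i.succ) - h (P.x i.castSucc)) 0)

/-- The negative variation `T_h⁻[a,b]` of a real function `h` on `[a,b]`. -/
def negVariation (h : ℝ → ℝ) (a b : ℝ) : ℝ≥0∞ :=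
  ⨆ P : IntervalPartition a b,
    ENNReal.ofReal (∑ i : Fin P.n, max (h (P.x i.castSucc) - h (P.x i.succ)) 0)

/-- `h` is absolutely continuous on `[a,b]`: for every `ε > 0` there is `δ > 0` such that
`Σᵢ |h(vᵢ) − h(uᵢ)| < ε` for every finite family of pairwise non-overlapping subintervals
`[uᵢ,vᵢ]` of `[a,b]` of total length `< δ`. -/
def AbsContOn (h : ℝ → ℝ) (a b : ℝ) : Prop :=
  ∀ ε > (0 : ℝ), ∃ δ > (0 : ℝ), ∀ n : ℕ, ∀ u v : Fin n → ℝ,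
    (∀ i, a ≤ u i ∧ u i ≤ v i ∧ v i ≤ b) →
    (∀ i j, i ≠ j → Set.Ioo (u i) (v i) ∩ Set.Ioo (u j) (v j) = ∅) →
    (∑ i, (v i - u i)) < δ → (∑ i, |h (v i) - h (u i)|) < ε

/-- `φ` is an increasing homeomorphism of `[a,b]` onto `[c,d]` sending `a` to `c` and `b` to `d`. -/
def IsIncrHomeo (φ : ℝ → ℝ) (a b c d : ℝ) : Prop :=
  ContinuousOn φ (Set.Icc a b) ∧ StrictMonoOn φ (Set.Icc a b) ∧ φ a = c ∧ φ b = d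

/-- `f : [a,b] → ℝ^M` and `g : [c,d] → ℝ^M` are Fréchet equivalent. -/
def FrechetEquiv {M : ℕ} (f : ℝ → EuclideanSpace ℝ (Fin M)) (a b : ℝ)
    (g : ℝ → EuclideanSpace ℝ (Fin M)) (c d : ℝ) : Prop :=
  ∀ ε > (0 : ℝ), ∃ φ : ℝ → ℝ, IsIncrHomeo φ a b c d ∧
    ∀ x ∈ Set.Icc a b, ‖f x - g (φ x)‖ < ε

/-- The Fréchet distance between the curves `C ↔ f : [a,b] → ℝ^M` and `D ↔ g : [c,d] → ℝ^M`. -/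
def frechetDist {M : ℕ} (f : ℝ → EuclideanSpace ℝ (Fin M)) (a b : ℝ)
    (g : ℝ → EuclideanSpace ℝ (Fin M)) (c d : ℝ) : ℝ :=
  ⨅ φ : {φ : ℝ → ℝ // IsIncrHomeo φ a b c d}, ⨆ x ∈ Set.Icc a b, ‖f x - g (φ.1 x)‖

/-- A parametric integrand: a continuous `F : ℝ^M × ℝ^M → ℝ` positively homogeneous of
degree 1 in the second variable. -/
def IsParametricIntegrand {M : ℕ}
    (F : EuclideanSpace ℝ (Fin M) → EuclideanSpace ℝ (Fin M) → ℝ) : Prop :=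
  Continuous (fun p : EuclideanSpace ℝ (Fin M) × EuclideanSpace ℝ (Fin M) => F p.1 p.2) ∧
  ∀ K : ℝ, 0 ≤ K → ∀ x t, F x (K • t) = K * F x t

/-- `L` is the line integral `∫_C F` of `F` along the curve `C ↔ f : [a,b] → ℝ^M`:
the limit, as the mesh tends to `0`, of the Riemann-type sums
`Σᵢ F(f(ξᵢ), f(xᵢ) − f(xᵢ₋₁))` over tagged partitions of `[a,b]`. -/
def IsLineIntegral {M : ℕ} (F : EuclideanSpace ℝ (Fin M) → EuclideanSpace ℝ (Fin M) → ℝ)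
    (f : ℝ → EuclideanSpace ℝ (Fin M)) (a b : ℝ) (L : ℝ) : Prop :=
  ∀ ε > (0 : ℝ), ∃ δ > (0 : ℝ), ∀ P : IntervalPartition a b, P.mesh < δ →
    ∀ ξ : Fin P.n → ℝ, (∀ i, ξ i ∈ Set.Icc (P.x i.castSucc) (P.x i.succ)) →
    |(∑ i : Fin P.n, F (f (ξ i)) (f (P.x i.succ) - f (P.x i.castSucc))) - L| < ε

namespace IntervalPartition

variable {a b : ℝ} (P : IntervalPartition a b)

/-- The partition points, reindexed over `ℕ` (constant `b` past the end). -/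
def y (i : ℕ) : ℝ := P.x ⟨min i P.n, by omega⟩

lemma y_mono : Monotone P.y := fun i j hij =>
  P.mono.monotone (by simp only [Fin.mk_le_mk]; omega)

lemma y_zero : P.y 0 = a := by
  have : (⟨min 0 P.n, by omega⟩ : Fin (P.n + 1)) = 0 := by
    ext; simp
  rw [y, this, P.first]

lemma y_of_le {i : ℕ} (h : P.n ≤ i) : P.y i = b := by
  have : (⟨min i P.n, by omega⟩ : Fin (P.n + 1)) = Fin.last P.n := by
    ext; simp [Fin.last]; omega
  rw [y, this, P.last]

lemma y_mem (i : ℕ) : P.y i ∈ Set.Icc a b := by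
  constructor
  · have h := P.y_mono (Nat.zero_le i); rwa [P.y_zero] at h
  · have h := P.y_mono (le_max_left i P.n)
    rwa [P.y_of_le (le_max_right i P.n)] at h

lemma n_pos (hab : a < b) : 0 < P.n := by
  by_contra h
  push_neg at h
  have hn : P.n = 0 := Nat.le_zero.mp h
  have h0 : (0 : Fin (P.n + 1)) = Fin.last P.n := by
    ext; simp [Fin.last, hn]
  have : a = b := by rw [← P.first, h0, P.last]
  linarith

lemma gap_le_mesh {i : ℕ} (h : i < P.n) : P.y (i + 1) - P.y i ≤ P.mesh := by
  have h1 : P.y (i + 1) = P.x (⟨i, h⟩ : Fin P.n).succ := by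
    rw [y]; congr 1; ext; simp [Fin.succ]; omega
  have h2 : P.y i = P.x (⟨i, h⟩ : Fin P.n).castSucc := by
    rw [y]; congr 1; ext; simp [Fin.castSucc]; omega
  rw [h1, h2, IntervalPartition.mesh]
  exact le_ciSup (f := fun j : Fin P.n => P.x j.succ - P.x j.castSucc)
    (Set.Finite.bddAbove (Set.finite_range _)) (⟨i, h⟩ : Fin P.n)

lemma mesh_nonneg (hab : a < b) : 0 ≤ P.mesh := by
  have h := P.n_pos hab
  have := P.gap_le_mesh h
  have h2 : P.y 0 < P.y 1 := by
    have : (⟨min 0 P.n, by omega⟩ : Fin (P.n+1)) < ⟨min 1 P.n, by omega⟩ := by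
      simp [Fin.lt_def]; omega
    exact P.mono this
  linarith

lemma y_succ_le (hab : a < b) (i : ℕ) : P.y (i + 1) ≤ P.y i + P.mesh := by
  rcases lt_or_ge i P.n with h | h
  · have := P.gap_le_mesh h; linarith
  · rw [P.y_of_le h, P.y_of_le (by omega)]
    have := P.mesh_nonneg hab; linarith

end IntervalPartition

/-- A generic two-point partition, witnessing nonemptiness. -/
def trivialPartition {a b : ℝ} (hab : a < b) : IntervalPartition a b where
  n := 1
  x := ![a, b]
  mono := by
    intro i j hij
    fin_cases i <;> fin_cases j <;> simp_all
  first := rfl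
  last := rfl

lemma inscribedSum_eq_range {M : ℕ} (f : ℝ → EuclideanSpace ℝ (Fin M)) {a b : ℝ}
    (P : IntervalPartition a b) :
    inscribedSum f P = ∑ i ∈ Finset.range P.n, ‖f (P.y (i + 1)) - f (P.y i)‖ := by
  rw [inscribedSum, ← Fin.sum_univ_eq_sum_range]
  refine Finset.sum_congr rfl fun i _ => ?_
  have hi := i.isLt
  have h1 : P.x i.succ = P.y (↑i + 1) := by
    rw [IntervalPartition.y]; congr 1; rw [Fin.ext_iff]; simp [Fin.succ]
  have h2 : P.x i.castSucc = P.y ↑i := by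
    rw [IntervalPartition.y]; congr 1; rw [Fin.ext_iff]; simp
  rw [h1, h2]

lemma norm_tel {M : ℕ} (f : ℝ → EuclideanSpace ℝ (Fin M)) (g : ℕ → ℝ) {p q : ℕ}
    (h : p ≤ q) :
    ‖f (g q) - f (g p)‖ ≤ ∑ i ∈ Finset.Ico p q, ‖f (g (i + 1)) - f (g i)‖ := by
  induction q, h using Nat.le_induction with
  | base => simp
  | succ q hpq ih =>
    rw [Finset.sum_Ico_succ_top hpq]
    have e : f (g (q + 1)) - f (g p) = (f (g q) - f (g p)) + (f (g (q + 1)) - f (g q)) := by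
      abel
    calc ‖f (g (q + 1)) - f (g p)‖ ≤ ‖f (g q) - f (g p)‖ + ‖f (g (q + 1)) - f (g q)‖ := by
          rw [e]; exact norm_add_le _ _
      _ ≤ _ := by linarith

lemma norm_group {M : ℕ} (f : ℝ → EuclideanSpace ℝ (Fin M)) (g : ℕ → ℝ) {ι : ℕ → ℕ}
    (hι : Monotone ι) (m : ℕ) :
    ∑ j ∈ Finset.range m, ‖f (g (ι (j + 1))) - f (g (ι j))‖ ≤
      ∑ i ∈ Finset.Ico (ι 0) (ι m), ‖f (g (i + 1)) - f (g i)‖ := by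
  induction m with
  | zero => simp
  | succ m ih =>
    rw [Finset.sum_range_succ,
      ← Finset.sum_Ico_consecutive _ (hι (Nat.zero_le m)) (hι (Nat.le_succ m))]
    exact add_le_add ih (norm_tel f g (hι (Nat.le_succ m)))
/-- Key lemma: if `ω` is a modulus of oscillation of `f` at scale `δ` on `[a,b]` and
`Q` has mesh `≤ δ`, then the inscribed sum over `Q` nearly dominates that over any `P`. -/
lemma key_lemma {M : ℕ} {f : ℝ → EuclideanSpace ℝ (Fin M)} {a b : ℝ} (hab : a < b)
    (P Q : IntervalPartition a b) {δ ω : ℝ} (hω : 0 ≤ ω)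
    (hmod : ∀ s ∈ Set.Icc a b, ∀ t ∈ Set.Icc a b, |s - t| ≤ δ → ‖f s - f t‖ ≤ ω)
    (hQ : Q.mesh ≤ δ) :
    inscribedSum f P - 2 * P.n * ω ≤ inscribedSum f Q := by
  classical
  set N := Q.n with hN
  set ι : ℕ → ℕ := fun j => Nat.findGreatest (fun i => Q.y i ≤ P.y j) N with hιdef
  have hδ0 : 0 ≤ δ := le_trans (Q.mesh_nonneg hab) hQ
  have hy0 : ∀ j, Q.y 0 ≤ P.y j := fun j => by
    rw [Q.y_zero]; exact (P.y_mem j).1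
  have hspec : ∀ j, Q.y (ι j) ≤ P.y j := by
    intro j
    simp only [hιdef]
    exact Nat.findGreatest_spec (P := fun i => Q.y i ≤ P.y j) (Nat.zero_le N) (hy0 j)
  have hmono : Monotone ι := by
    intro j k hjk
    simp only [hιdef]
    exact Nat.findGreatest_mono (P := fun i => Q.y i ≤ P.y j) (Q := fun i => Q.y i ≤ P.y k) (fun i hi => le_trans hi (P.y_mono hjk)) le_rfl
  have hle : ∀ j, ι j ≤ N := by
    intro j
    simp only [hιdef]
    exact Nat.findGreatest_le (P := fun i => Q.y i ≤ P.y j) N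
  have hclose : ∀ j, |P.y j - Q.y (ι j)| ≤ δ := by
    intro j
    rcases lt_or_ge (ι j) N with h | h
    · have h1 : ¬ (Q.y (ι j + 1) ≤ P.y j) :=
        Nat.findGreatest_is_greatest (Nat.lt_succ_self _) h
      push_neg at h1
      have h2 : Q.y (ι j + 1) ≤ Q.y (ι j) + Q.mesh := Q.y_succ_le hab _
      have h3 := hspec j
      rw [abs_of_nonneg (by linarith)]
      linarith
    · have hb : Q.y (ι j) = b := Q.y_of_le h
      have h3 := hspec j
      have h4 : P.y j ≤ b := (P.y_mem j).2
      rw [hb] at h3 ⊢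
      have : P.y j = b := le_antisymm h4 h3
      rw [this, sub_self, abs_zero]; exact hδ0
  have hnorm : ∀ j, ‖f (P.y j) - f (Q.y (ι j))‖ ≤ ω := fun j =>
    hmod _ (P.y_mem j) _ (Q.y_mem _) (hclose j)
  rw [inscribedSum_eq_range, inscribedSum_eq_range]
  have step1 : ∑ j ∈ Finset.range P.n, ‖f (P.y (j + 1)) - f (P.y j)‖ - 2 * P.n * ω ≤
      ∑ j ∈ Finset.range P.n, ‖f (Q.y (ι (j + 1))) - f (Q.y (ι j))‖ := by
    have hterm : ∀ j ∈ Finset.range P.n,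
        ‖f (P.y (j + 1)) - f (P.y j)‖ - 2 * ω ≤ ‖f (Q.y (ι (j + 1))) - f (Q.y (ι j))‖ := by
      intro j _
      have e : f (P.y (j + 1)) - f (P.y j) =
          (f (P.y (j + 1)) - f (Q.y (ι (j + 1)))) + (f (Q.y (ι (j + 1))) - f (Q.y (ι j)))
            + (f (Q.y (ι j)) - f (P.y j)) := by abel
      have h1 : ‖f (P.y (j + 1)) - f (P.y j)‖ ≤
          ‖f (P.y (j + 1)) - f (Q.y (ι (j + 1)))‖ + ‖f (Q.y (ι (j + 1))) - f (Q.y (ι j))‖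
            + ‖f (Q.y (ι j)) - f (P.y j)‖ := by
        rw [e]; exact norm_add₃_le
      have h2 := hnorm (j + 1)
      have h3 : ‖f (Q.y (ι j)) - f (P.y j)‖ ≤ ω := by rw [norm_sub_rev]; exact hnorm j
      linarith
    calc ∑ j ∈ Finset.range P.n, ‖f (P.y (j + 1)) - f (P.y j)‖ - 2 * P.n * ω
        = ∑ j ∈ Finset.range P.n, (‖f (P.y (j + 1)) - f (P.y j)‖ - 2 * ω) := by
          rw [Finset.sum_sub_distrib, Finset.sum_const, Finset.card_range]
          push_cast; ring
      _ ≤ _ := Finset.sum_le_sum hterm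
  have step2 := norm_group f Q.y hmono P.n
  have step3 : ∑ i ∈ Finset.Ico (ι 0) (ι P.n), ‖f (Q.y (i + 1)) - f (Q.y i)‖ ≤
      ∑ i ∈ Finset.range N, ‖f (Q.y (i + 1)) - f (Q.y i)‖ := by
    apply Finset.sum_le_sum_of_subset_of_nonneg
    · intro i hi
      rw [Finset.mem_Ico] at hi
      rw [Finset.mem_range]
      exact lt_of_lt_of_le hi.2 (hle _)
    · intros; positivity
  linarith

/-- Comparing inscribed sums of nearby curves over the same partition. -/
lemma inscribedSum_le_of_close {M : ℕ} (f g : ℝ → EuclideanSpace ℝ (Fin M)) {a b : ℝ}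
    (P : IntervalPartition a b) {η : ℝ}
    (hη : ∀ x ∈ Set.Icc a b, ‖f x - g x‖ ≤ η) :
    inscribedSum f P ≤ inscribedSum g P + 2 * P.n * η := by
  rw [inscribedSum_eq_range, inscribedSum_eq_range]
  have hterm : ∀ j ∈ Finset.range P.n,
      ‖f (P.y (j + 1)) - f (P.y j)‖ ≤ ‖g (P.y (j + 1)) - g (P.y j)‖ + 2 * η := by
    intro j _
    have e : f (P.y (j + 1)) - f (P.y j) =
        (f (P.y (j + 1)) - g (P.y (j + 1))) + (g (P.y (j + 1)) - g (P.y j))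
          + (g (P.y j) - f (P.y j)) := by abel
    have h1 : ‖f (P.y (j + 1)) - f (P.y j)‖ ≤
        ‖f (P.y (j + 1)) - g (P.y (j + 1))‖ + ‖g (P.y (j + 1)) - g (P.y j)‖
          + ‖g (P.y j) - f (P.y j)‖ := by rw [e]; exact norm_add₃_le
    have h2 := hη _ (P.y_mem (j + 1))
    have h3 : ‖g (P.y j) - f (P.y j)‖ ≤ η := by rw [norm_sub_rev]; exact hη _ (P.y_mem j)
    linarith
  calc ∑ j ∈ Finset.range P.n, ‖f (P.y (j + 1)) - f (P.y j)‖
      ≤ ∑ j ∈ Finset.range P.n, (‖g (P.y (j + 1)) - g (P.y j)‖ + 2 * η) :=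
        Finset.sum_le_sum hterm
    _ = _ := by
        rw [Finset.sum_add_distrib, Finset.sum_const, Finset.card_range]
        push_cast; ring

lemma inscribedSum_nonneg {M : ℕ} (f : ℝ → EuclideanSpace ℝ (Fin M)) {a b : ℝ}
    (P : IntervalPartition a b) : 0 ≤ inscribedSum f P :=
  Finset.sum_nonneg fun _ _ => norm_nonneg _

lemma inscribedSum_le_toReal {M : ℕ} (f : ℝ → EuclideanSpace ℝ (Fin M)) {a b : ℝ}
    (h : curveLength f a b < ⊤) (P : IntervalPartition a b) :
    inscribedSum f P ≤ (curveLength f a b).toReal := by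
  have h1 : ENNReal.ofReal (inscribedSum f P) ≤ curveLength f a b :=
    le_iSup (fun P => ENNReal.ofReal (inscribedSum f P)) P
  calc inscribedSum f P = (ENNReal.ofReal (inscribedSum f P)).toReal :=
        (ENNReal.toReal_ofReal (inscribedSum_nonneg f P)).symm
    _ ≤ _ := ENNReal.toReal_mono h.ne h1

lemma exists_partition_close {M : ℕ} (f : ℝ → EuclideanSpace ℝ (Fin M)) {a b : ℝ}
    (hab : a < b) (h : curveLength f a b < ⊤) {ε : ℝ} (hε : 0 < ε) :
    ∃ P : IntervalPartition a b, (curveLength f a b).toReal - ε < inscribedSum f P := by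
  by_contra hc
  push_neg at hc
  have h0 := inscribedSum_nonneg f (trivialPartition hab)
  have hL : (0 : ℝ) ≤ (curveLength f a b).toReal - ε :=
    le_trans h0 (hc (trivialPartition hab))
  have h1 : curveLength f a b ≤ ENNReal.ofReal ((curveLength f a b).toReal - ε) := by
    simp only [curveLength]
    exact iSup_le fun P => ENNReal.ofReal_le_ofReal (hc P)
  have h2 : (curveLength f a b).toReal ≤ (curveLength f a b).toReal - ε := by
    have h3 := ENNReal.toReal_mono ENNReal.ofReal_ne_top h1
    rwa [ENNReal.toReal_ofReal hL] at h3
  linarith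

/-- Single-curve version: inscribed sums converge to the length as the mesh tends to 0. -/
lemma single_curve {M : ℕ} {f : ℝ → EuclideanSpace ℝ (Fin M)} {a b : ℝ} (hab : a < b)
    (hc : ContinuousOn f (Set.Icc a b)) (hr : curveLength f a b < ⊤) {ε : ℝ} (hε : 0 < ε) :
    ∃ δ > (0 : ℝ), ∀ Q : IntervalPartition a b, Q.mesh < δ →
      (curveLength f a b).toReal - inscribedSum f Q < ε := by
  obtain ⟨P, hP⟩ := exists_partition_close f hab hr (half_pos hε)
  set ω := ε / (8 * ((P.n : ℝ) + 1)) with hωdef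
  have hω : 0 < ω := by rw [hωdef]; positivity
  have huc : UniformContinuousOn f (Set.Icc a b) :=
    isCompact_Icc.uniformContinuousOn_of_continuous hc
  obtain ⟨δ, hδ0, hδ⟩ := Metric.uniformContinuousOn_iff.mp huc ω hω
  refine ⟨δ, hδ0, fun Q hQ => ?_⟩
  have hmod : ∀ s ∈ Set.Icc a b, ∀ t ∈ Set.Icc a b, |s - t| ≤ Q.mesh → ‖f s - f t‖ ≤ ω := by
    intro s hs t ht hst
    have : dist s t < δ := by rw [Real.dist_eq]; exact lt_of_le_of_lt hst hQ
    have h := hδ s hs t ht this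
    rw [dist_eq_norm] at h
    exact h.le
  have hkey := key_lemma hab P Q hω.le hmod le_rfl
  have hVP := inscribedSum_le_toReal f hr P
  have hfrac : 2 * (P.n : ℝ) * ω ≤ ε / 4 := by
    rw [hωdef]
    rw [show 2 * (P.n : ℝ) * (ε / (8 * ((P.n : ℝ) + 1))) =
      (2 * (P.n : ℝ) * ε) / (8 * ((P.n : ℝ) + 1)) from by ring]
    rw [div_le_div_iff₀ (by positivity) (by norm_num)]
    have hn : (0 : ℝ) ≤ (P.n : ℝ) := Nat.cast_nonneg _
    nlinarith
  linarith
/-- If continuous rectifiable curves `C_k ↔ f_k` converge uniformly on `[a,b]`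
to the continuous rectifiable curve `C₀ ↔ f₀` with `ℓ(C_k) → ℓ(C₀)`, then the inscribed
sums converge to the lengths uniformly in `k`: for every `ε > 0` there is `δ > 0` such that
`ℓ(C_k) − V(f_k;Q) < ε` for every `k` and every partition `Q` of mesh `< δ`. -/
theorem inscribedSum_tendsto_length_uniformly {M : ℕ} (a b : ℝ) (hab : a < b)
    (f₀ : ℝ → EuclideanSpace ℝ (Fin M)) (fk : ℕ → ℝ → EuclideanSpace ℝ (Fin M))
    (hc0 : ContinuousOn f₀ (Set.Icc a b)) (hr0 : curveLength f₀ a b < ⊤)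
    (hck : ∀ k, ContinuousOn (fk k) (Set.Icc a b))
    (hrk : ∀ k, curveLength (fk k) a b < ⊤)
    (hunif : TendstoUniformlyOn fk f₀ atTop (Set.Icc a b))
    (hlen : Tendsto (fun k => (curveLength (fk k) a b).toReal) atTop
      (nhds (curveLength f₀ a b).toReal)) :
    ∀ ε > (0 : ℝ), ∃ δ > (0 : ℝ), ∀ k : ℕ, ∀ Q : IntervalPartition a b, Q.mesh < δ →
      (curveLength (fk k) a b).toReal - inscribedSum (fk k) Q < ε := by
  intro ε hε
  set L0 := (curveLength f₀ a b).toReal with hL0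
  -- a good partition for f₀
  obtain ⟨P, hP⟩ := exists_partition_close f₀ hab hr0 (by positivity : (0:ℝ) < ε / 8)
  set η := ε / (32 * ((P.n : ℝ) + 1)) with hηdef
  have hη : 0 < η := by rw [hηdef]; positivity
  -- lengths eventually close
  obtain ⟨K₁, hK₁⟩ := Metric.tendsto_atTop.mp hlen (ε / 8) (by positivity)
  -- uniform closeness eventually
  obtain ⟨K₂, hK₂⟩ := Filter.eventually_atTop.mp
    ((Metric.tendstoUniformlyOn_iff.mp hunif) η hη)
  set K := max K₁ K₂ with hK
  -- uniform continuity of f₀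
  have huc : UniformContinuousOn f₀ (Set.Icc a b) :=
    isCompact_Icc.uniformContinuousOn_of_continuous hc0
  obtain ⟨δ₀, hδ₀0, hδ₀⟩ := Metric.uniformContinuousOn_iff.mp huc η hη
  -- deltas for small k
  have hsingle : ∀ k : ℕ, ∃ δ > (0 : ℝ), ∀ Q : IntervalPartition a b, Q.mesh < δ →
      (curveLength (fk k) a b).toReal - inscribedSum (fk k) Q < ε :=
    fun k => single_curve hab (hck k) (hrk k) hε
  choose δf hδf0 hδf using hsingle
  classical
  set s : Finset ℝ := insert δ₀ ((Finset.range K).image δf) with hs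
  have hsne : s.Nonempty := ⟨δ₀, Finset.mem_insert_self _ _⟩
  set δ := s.min' hsne with hδdef
  have hδmem := s.min'_mem hsne
  have hδpos : 0 < δ := by
    rcases Finset.mem_insert.mp hδmem with h | h
    · rw [hδdef, h]; exact hδ₀0
    · obtain ⟨k, _, hk⟩ := Finset.mem_image.mp h
      rw [hδdef, ← hk]; exact hδf0 k
  refine ⟨δ, hδpos, fun k Q hQ => ?_⟩
  rcases lt_or_ge k K with hkK | hkK
  · -- small k: use the per-curve δ
    have hmem : δf k ∈ s := Finset.mem_insert_of_mem
      (Finset.mem_image_of_mem δf (Finset.mem_range.mpr hkK))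
    exact hδf k Q (lt_of_lt_of_le hQ (s.min'_le _ hmem))
  · -- large k
    have hδδ₀ : δ ≤ δ₀ := s.min'_le _ (Finset.mem_insert_self _ _)
    have hk1 : K₁ ≤ k := le_trans (le_max_left _ _) hkK
    have hk2 : K₂ ≤ k := le_trans (le_max_right _ _) hkK
    -- closeness of fk k to f₀
    have hclose : ∀ x ∈ Set.Icc a b, ‖fk k x - f₀ x‖ ≤ η := by
      intro x hx
      have h := hK₂ k hk2 x hx
      rw [dist_eq_norm, norm_sub_rev] at h
      exact h.le
    have hclose' : ∀ x ∈ Set.Icc a b, ‖f₀ x - fk k x‖ ≤ η := by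
      intro x hx
      rw [norm_sub_rev]; exact hclose x hx
    -- modulus for fk k at scale Q.mesh
    have hmod : ∀ s' ∈ Set.Icc a b, ∀ t ∈ Set.Icc a b, |s' - t| ≤ Q.mesh →
        ‖fk k s' - fk k t‖ ≤ 3 * η := by
      intro u hu v hv huv
      have hd : dist u v < δ₀ := by
        rw [Real.dist_eq]
        exact lt_of_le_of_lt huv (lt_of_lt_of_le hQ hδδ₀)
      have h0 : ‖f₀ u - f₀ v‖ ≤ η := by
        have := hδ₀ u hu v hv hd
        rw [dist_eq_norm] at this
        exact this.le
      have e : fk k u - fk k v = (fk k u - f₀ u) + (f₀ u - f₀ v) + (f₀ v - fk k v) := by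
        abel
      have h1 : ‖fk k u - fk k v‖ ≤ ‖fk k u - f₀ u‖ + ‖f₀ u - f₀ v‖ + ‖f₀ v - fk k v‖ := by
        rw [e]; exact norm_add₃_le
      have h2 := hclose u hu
      have h3 := hclose' v hv
      linarith
    have hkey := key_lemma hab P Q (by positivity : (0:ℝ) ≤ 3 * η) hmod le_rfl
    have hcomp := inscribedSum_le_of_close f₀ (fk k) P hclose'
    have hlenk : (curveLength (fk k) a b).toReal - L0 < ε / 8 := by
      have h := hK₁ k hk1
      rw [Real.dist_eq] at h
      have := abs_lt.mp h
      linarith [this.1, this.2]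
    have hfrac : 8 * (P.n : ℝ) * η ≤ ε / 4 := by
      rw [hηdef]
      rw [show 8 * (P.n : ℝ) * (ε / (32 * ((P.n : ℝ) + 1))) =
        (8 * (P.n : ℝ) * ε) / (32 * ((P.n : ℝ) + 1)) from by ring]
      rw [div_le_div_iff₀ (by positivity) (by norm_num)]
      have hn : (0 : ℝ) ≤ (P.n : ℝ) := Nat.cast_nonneg _
      nlinarith
    linarith

end
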